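/- Let π ∈ (0,1)^n, V(x) = ∑_{r ∈ {±1}^n} g_π(r) log(g_π(r)/g_x(r)) (the KL divergence from g_π to g_x), and f_i(x) = ∑_{r ∈ {±1}^n} g_π(r) f̃_i(r,x). Then for all x ∈ (0,1)^n and all i ∈ [n], ∂V/∂x_i (x) = − f_i(x)/(x_i(1−x_i)). -/

import Mathlib

open Real Finset

/-- Sign of a Boolean: `true ↦ +1`, `false ↦ -1`. -/
def sg (b : Bool) : ℝ := if b then 1 else -1

/-- Output distribution (cosh form). -/
noncomputable def gc {n : ℕ} (x : Fin n → ℝ) (r : Fin n → ℝ) : ℝ :=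
  Real.cosh ((∑ j, r j * Real.log ((1 - x j) / x j)) / 2) *
    ∏ j, Real.sqrt (x j * (1 - x j))

/-- Update field coordinate (tanh form). -/
noncomputable def ft {n : ℕ} (r x : Fin n → ℝ) (i : Fin n) : ℝ :=
  (1/2) * (1 - Real.tanh ((∑ j, r j * Real.log ((1 - x j) / x j)) / 2) * r i) - x i

/-- KL divergence from `g_p` to `g_x` (sum over the hypercube `{±1}^n`). -/
noncomputable def V {n : ℕ} (p x : Fin n → ℝ) : ℝ :=
  ∑ r : Fin n → Bool, gc p (fun k => sg (r k)) *
    Real.log (gc p (fun k => sg (r k)) / gc x (fun k => sg (r k)))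

/-- Mean-field vector field `f_i(x) = E_{R ∼ g_p}[f̃_i(R,x)]`. -/
noncomputable def fvec {n : ℕ} (p x : Fin n → ℝ) (i : Fin n) : ℝ :=
  ∑ r : Fin n → Bool, gc p (fun k => sg (r k)) * ft (fun k => sg (r k)) x i

lemma gc_pos {n : ℕ} (x : Fin n → ℝ) (hx : ∀ i, x i ∈ Set.Ioo (0:ℝ) 1) (r : Fin n → ℝ) :
    0 < gc x r :=
  mul_pos (Real.cosh_pos _) (Finset.prod_pos fun j _ =>
    Real.sqrt_pos.2 (mul_pos (hx j).1 (by linarith [(hx j).2])))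

lemma key {n : ℕ} (x : Fin n → ℝ) (hx : ∀ i, x i ∈ Set.Ioo (0:ℝ) 1) (i : Fin n)
    (G : ℝ) (hG : 0 < G) (rs : Fin n → ℝ) :
    HasDerivAt (fun t => G * Real.log (G / gc (Function.update x i t) rs))
      (G * (Real.tanh ((∑ j, rs j * Real.log ((1 - x j) / x j)) / 2) * rs i - (1 - 2 * x i))
        / (2 * x i * (1 - x i))) (x i) := by
  obtain ⟨hx0, hx1⟩ := hx i
  set a := x i with ha
  set s := rs i with hs
  set c := ∑ j ∈ univ.erase i, rs j * Real.log ((1 - x j) / x j) with hc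
  set B := ∏ j ∈ univ.erase i, Real.sqrt (x j * (1 - x j)) with hB
  have hBpos : 0 < B := Finset.prod_pos fun j _ =>
    Real.sqrt_pos.2 (mul_pos (hx j).1 (by linarith [(hx j).2]))
  -- decomposition of the sum and product under update
  have hsum : ∀ t : ℝ, (∑ j, rs j * Real.log ((1 - Function.update x i t j) /
      Function.update x i t j)) = s * Real.log ((1 - t) / t) + c := by
    intro t
    rw [← Finset.add_sum_erase _ _ (mem_univ i)]
    congr 1
    · rw [Function.update_self]
    · apply Finset.sum_congr rfl
      intro j hj
      rw [Function.update_of_ne (Finset.ne_of_mem_erase hj)]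
  have hprod : ∀ t : ℝ, (∏ j, Real.sqrt (Function.update x i t j *
      (1 - Function.update x i t j))) = Real.sqrt (t * (1 - t)) * B := by
    intro t
    rw [← Finset.mul_prod_erase _ _ (mem_univ i)]
    congr 1
    · rw [Function.update_self]
    · apply Finset.prod_congr rfl
      intro j hj
      rw [Function.update_of_ne (Finset.ne_of_mem_erase hj)]
  -- nice local formula
  set F : ℝ → ℝ := fun t =>
    G * (Real.log G - Real.log (Real.cosh ((s * (Real.log (1 - t) - Real.log t) + c) / 2))
      - ((1/2) * Real.log t + (1/2) * Real.log (1 - t) + Real.log B)) with hF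
  have heq : (fun t => G * Real.log (G / gc (Function.update x i t) rs)) =ᶠ[nhds a] F := by
    filter_upwards [Ioo_mem_nhds hx0 hx1] with t ht
    obtain ⟨ht0, ht1⟩ := ht
    have h1t : (0:ℝ) < 1 - t := by linarith
    have hcosh : (0:ℝ) < Real.cosh ((s * (Real.log (1 - t) - Real.log t) + c) / 2) :=
      Real.cosh_pos _
    have hsq : (0:ℝ) < Real.sqrt (t * (1 - t)) := Real.sqrt_pos.2 (mul_pos ht0 h1t)
    have hlogdiv : Real.log ((1 - t) / t) = Real.log (1 - t) - Real.log t :=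
      Real.log_div h1t.ne' ht0.ne'
    have hgc : gc (Function.update x i t) rs =
        Real.cosh ((s * (Real.log (1 - t) - Real.log t) + c) / 2) *
          (Real.sqrt (t * (1 - t)) * B) := by
      rw [gc, hsum t, hprod t, hlogdiv]
    rw [hgc, hF]
    have hlog : Real.log (G / (Real.cosh ((s * (Real.log (1 - t) - Real.log t) + c) / 2) *
        (Real.sqrt (t * (1 - t)) * B))) =
        Real.log G - (Real.log (Real.cosh ((s * (Real.log (1 - t) - Real.log t) + c) / 2))
          + (Real.log (Real.sqrt (t * (1 - t))) + Real.log B)) := by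
      rw [Real.log_div hG.ne' (by positivity), Real.log_mul hcosh.ne' (by positivity),
        Real.log_mul hsq.ne' hBpos.ne']
    rw [hlog, Real.log_sqrt (by positivity), Real.log_mul ht0.ne' h1t.ne']
    ring
  have h1a : (0:ℝ) < 1 - a := by linarith
  -- derivative of F
  have d1 : HasDerivAt (fun t : ℝ => Real.log t) a⁻¹ a := Real.hasDerivAt_log hx0.ne'
  have d2 : HasDerivAt (fun t : ℝ => Real.log (1 - t)) (-1 / (1 - a)) a := by
    have h : HasDerivAt (fun t : ℝ => 1 - t) (-1) a := (hasDerivAt_id a).const_sub 1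
    exact h.log h1a.ne'
  have dinner : HasDerivAt (fun t : ℝ => (s * (Real.log (1 - t) - Real.log t) + c) / 2)
      ((s * (-1 / (1 - a) - a⁻¹)) / 2) a :=
    (((d2.sub d1).const_mul s).add_const c).div_const 2
  have dlc : HasDerivAt
      (fun t : ℝ => Real.log (Real.cosh ((s * (Real.log (1 - t) - Real.log t) + c) / 2)))
      (Real.sinh ((s * (Real.log (1 - a) - Real.log a) + c) / 2) *
        ((s * (-1 / (1 - a) - a⁻¹)) / 2) /
        Real.cosh ((s * (Real.log (1 - a) - Real.log a) + c) / 2)) a :=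
    (dinner.cosh).log (Real.cosh_pos _).ne'
  have dF : HasDerivAt F
      (G * ((0 - Real.sinh ((s * (Real.log (1 - a) - Real.log a) + c) / 2) *
        ((s * (-1 / (1 - a) - a⁻¹)) / 2) /
        Real.cosh ((s * (Real.log (1 - a) - Real.log a) + c) / 2)) -
        ((1/2) * a⁻¹ + (1/2) * (-1 / (1 - a)) + 0))) a := by
    exact ((((hasDerivAt_const a (Real.log G)).sub dlc).sub
      (((d1.const_mul (1/2 : ℝ)).add (d2.const_mul (1/2 : ℝ))).add
        (hasDerivAt_const a (Real.log B)))).const_mul G)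
  have hargT : (∑ j, rs j * Real.log ((1 - x j) / x j)) / 2 =
      (s * (Real.log (1 - a) - Real.log a) + c) / 2 := by
    have := hsum a
    rw [Function.update_eq_self] at this
    rw [this, Real.log_div h1a.ne' hx0.ne']
  have hD := dF.congr_of_eventuallyEq heq
  refine hD.congr_deriv (Eq.symm ?_)
  rw [hargT, Real.tanh_eq_sinh_div_cosh]
  have hane : a ≠ 0 := hx0.ne'
  have h1ane : (1:ℝ) - a ≠ 0 := h1a.ne'
  have hcne := (Real.cosh_pos ((s * (Real.log (1 - a) - Real.log a) + c) / 2)).ne'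
  field_simp
  ring

theorem stmt5 (n : ℕ) (p : Fin n → ℝ) (hp : ∀ i, p i ∈ Set.Ioo (0:ℝ) 1)
    (x : Fin n → ℝ) (hx : ∀ i, x i ∈ Set.Ioo (0:ℝ) 1) (i : Fin n) :
    HasDerivAt (fun t => V p (Function.update x i t))
      (-(fvec p x i) / (x i * (1 - x i))) (x i) := by
  obtain ⟨hx0, hx1⟩ := hx i
  have h1a : (0:ℝ) < 1 - x i := by linarith
  have hd := HasDerivAt.fun_sum (u := (univ : Finset (Fin n → Bool)))
    (A := fun r t => gc p (fun k => sg (r k)) *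
      Real.log (gc p (fun k => sg (r k)) / gc (Function.update x i t) (fun k => sg (r k))))
    (fun r _ => key x hx i (gc p (fun k => sg (r k))) (gc_pos p hp _) (fun k => sg (r k)))
  simp only [V]
  refine hd.congr_deriv (Eq.symm ?_)
  rw [fvec, neg_div, Finset.sum_div, ← Finset.sum_neg_distrib]
  apply Finset.sum_congr rfl
  intro r _
  rw [ft]
  field_simp
  ring
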